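/- For every 2×2 real symmetric positive definite matrix N there exists a 2×2 symplectic matrix S (i.e. S J Sᵀ = J, where J = [[0,1],[-1,0]]) such that S N Sᵀ = √(det N)·I. In particular Tr(S N Sᵀ) = 2√(det N) ≤ Tr N, so the symplectic transformation makes the noise matrix proportional to the identity without increasing its trace or changing its determinant. -/

import Mathlib

open Matrix

noncomputable section

def J2 : Matrix (Fin 2) (Fin 2) ℝ := !![0, 1; -1, 0]

/-- any 2×2 symmetric positive definite noise matrix can be brought to
√(det N)·I by a symplectic congruence, without increasing the trace. -/
theorem symplectic_diagonalization_of_noise (N : Matrix (Fin 2) (Fin 2) ℝ)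
    (hN : N.PosDef) :
    ∃ S : Matrix (Fin 2) (Fin 2) ℝ, S * J2 * Sᵀ = J2 ∧
      S * N * Sᵀ = Real.sqrt N.det • (1 : Matrix (Fin 2) (Fin 2) ℝ) ∧
      (S * N * Sᵀ).trace = 2 * Real.sqrt N.det ∧
      2 * Real.sqrt N.det ≤ N.trace := by
  set a := N 0 0 with ha
  set b := N 0 1 with hb
  set c := N 1 1 with hc
  have hsymm : N 1 0 = b := by
    have h := congrFun (congrFun hN.1 0) 1
    simpa [Matrix.conjTranspose_apply] using h
  have hdet : N.det = a * c - b * b := by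
    rw [Matrix.det_fin_two, hsymm]
  have ha0 : 0 < a := by
    have h := hN.dotProduct_mulVec_pos (x := ![1, 0]) (by
      intro h; simpa using congrFun h 0)
    simpa [dotProduct, Matrix.mulVec, Fin.sum_univ_two] using h
  have hc0 : 0 < c := by
    have h := hN.dotProduct_mulVec_pos (x := ![0, 1]) (by
      intro h; simpa using congrFun h 1)
    simpa [dotProduct, Matrix.mulVec, Fin.sum_univ_two] using h
  have hdet0 : 0 < N.det := hN.det_pos
  set d := Real.sqrt N.det with hd
  have hd0 : 0 < d := Real.sqrt_pos.mpr hdet0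
  have hd2 : d * d = a * c - b * b := by
    rw [← hdet, hd, Real.mul_self_sqrt hdet0.le]
  have ht0 : 0 < d * (a + c + 2 * d) := by positivity
  set k : ℝ := (Real.sqrt (d * (a + c + 2 * d)))⁻¹ with hk
  have hk2 : k * k = (d * (a + c + 2 * d))⁻¹ := by
    rw [hk, ← mul_inv, Real.mul_self_sqrt ht0.le]
  set A : Matrix (Fin 2) (Fin 2) ℝ := !![c + d, -b; -b, a + d] with hA
  have hAT : Aᵀ = A := by
    ext i j; fin_cases i <;> fin_cases j <;> simp [hA]
  have hNeta : N = !![a, b; b, c] := by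
    ext i j
    fin_cases i <;> fin_cases j <;> simp [hsymm] <;> rfl
  have hAJ : A * J2 * A = (d * (a + c + 2 * d)) • J2 := by
    ext i j
    fin_cases i <;> fin_cases j <;>
      simp [hA, J2, Matrix.mul_apply, Fin.sum_univ_two] <;>
      first
        | ring1
        | linear_combination hd2
        | linear_combination -hd2
  have hAN : A * N * A = (d * (a + c + 2 * d) * d) • (1 : Matrix (Fin 2) (Fin 2) ℝ) := by
    rw [hNeta]
    ext i j
    fin_cases i <;> fin_cases j <;>
      simp [hA, Matrix.mul_apply, Fin.sum_univ_two, Matrix.one_apply] <;>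
      first
        | ring1
        | linear_combination b * hd2
        | linear_combination (-b) * hd2
        | linear_combination (c + 2 * d) * hd2
        | linear_combination (-(c + 2 * d)) * hd2
        | linear_combination (a + 2 * d) * hd2
        | linear_combination (-(a + 2 * d)) * hd2
  have hSN : (k • A) * N * (k • A)ᵀ = d • (1 : Matrix (Fin 2) (Fin 2) ℝ) := by
    rw [Matrix.transpose_smul, hAT, Matrix.smul_mul, Matrix.smul_mul, Matrix.mul_smul,
      hAN, smul_smul, smul_smul, hk2]
    congr 1
    field_simp
  refine ⟨k • A, ?_, hSN, ?_, ?_⟩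
  · rw [Matrix.transpose_smul, hAT, Matrix.smul_mul, Matrix.smul_mul, Matrix.mul_smul,
      hAJ, smul_smul, smul_smul, hk2]
    rw [inv_mul_cancel₀ ht0.ne', one_smul]
  · rw [hSN, Matrix.trace_smul, Matrix.trace_one, smul_eq_mul]
    norm_num [Fintype.card_fin]
    ring
  · have htr : N.trace = a + c := by
      rw [Matrix.trace_fin_two]
    rw [htr]
    nlinarith [hd2, sq_nonneg (a - c), sq_nonneg b, hd0.le, ha0, hc0]
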